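/- arXiv:2012.03288 — 2 statements merged into one kernel-verified Lean document; each statement's English description precedes it below -/
import Mathlib

section
/- The function u(x,y) = sin(x) + sin(y) + sin((x+y)/√2) on ℝ² satisfies Δu = u (geometer's Laplacian) and vanishes on the line y = -x. -/
open Real

lemma hd1 (d x : ℝ) : HasDerivAt (fun t : ℝ => Real.sin ((t + d) / Real.sqrt 2))
    (Real.cos ((x + d) / Real.sqrt 2) * (Real.sqrt 2)⁻¹) x := by
  have h1 : HasDerivAt (fun t : ℝ => (t + d) / Real.sqrt 2) (1 / Real.sqrt 2) x :=
    ((hasDerivAt_id x).add_const d).div_const _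
  have := (Real.hasDerivAt_sin ((x + d) / Real.sqrt 2)).comp x h1
  simpa [one_div, mul_comm, Function.comp_def] using this

lemma deriv1 (c d : ℝ) :
    deriv (fun t : ℝ => Real.sin t + c + Real.sin ((t + d) / Real.sqrt 2)) =
    fun t : ℝ => Real.cos t + Real.cos ((t + d) / Real.sqrt 2) * (Real.sqrt 2)⁻¹ := by
  funext x
  exact (((Real.hasDerivAt_sin x).add_const c).add (hd1 d x)).deriv

lemma deriv2 (c d x : ℝ) :
    deriv (deriv (fun t : ℝ => Real.sin t + c + Real.sin ((t + d) / Real.sqrt 2))) x =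
    -Real.sin x + -Real.sin ((x + d) / Real.sqrt 2) * (Real.sqrt 2)⁻¹ * (Real.sqrt 2)⁻¹ := by
  rw [deriv1]
  have h1 : HasDerivAt (fun t : ℝ => (t + d) / Real.sqrt 2) (1 / Real.sqrt 2) x :=
    ((hasDerivAt_id x).add_const d).div_const _
  have hc : HasDerivAt (fun t : ℝ => Real.cos ((t + d) / Real.sqrt 2))
      (-Real.sin ((x + d) / Real.sqrt 2) * (Real.sqrt 2)⁻¹) x := by
    simpa [one_div, Function.comp_def] using (Real.hasDerivAt_cos ((x + d) / Real.sqrt 2)).comp x h1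
  exact ((Real.hasDerivAt_cos x).add (hc.mul_const _)).deriv

theorem nullset_example (u : ℝ → ℝ → ℝ)
    (hu : u = fun x y => Real.sin x + Real.sin y + Real.sin ((x + y) / Real.sqrt 2)) :
    (∀ x y, -((deriv (deriv (fun x' => u x' y)) x) + (deriv (deriv (fun y' => u x y')) y))
      = u x y) ∧
    (∀ x, u x (-x) = 0) := by
  subst hu
  have h2 : (Real.sqrt 2)⁻¹ * (Real.sqrt 2)⁻¹ = 1 / 2 := by
    rw [← mul_inv]
    rw [Real.mul_self_sqrt (by norm_num)]
    norm_num
  constructor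
  · intro x y
    have hx : (fun x' => Real.sin x' + Real.sin y + Real.sin ((x' + y) / Real.sqrt 2)) =
        fun t : ℝ => Real.sin t + Real.sin y + Real.sin ((t + y) / Real.sqrt 2) := rfl
    have hy : (fun y' => Real.sin x + Real.sin y' + Real.sin ((x + y') / Real.sqrt 2)) =
        fun t : ℝ => Real.sin t + Real.sin x + Real.sin ((t + x) / Real.sqrt 2) := by
      funext t; ring_nf
    rw [hx, hy, deriv2, deriv2]
    have hxy : Real.sin ((y + x) / Real.sqrt 2) = Real.sin ((x + y) / Real.sqrt 2) := by
      ring_nf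
    rw [hxy]
    linear_combination 2 * Real.sin ((x + y) / Real.sqrt 2) * h2
  · intro x
    simp [Real.sin_neg]
end

section
/- Let u : ℝⁿ → ℝ be real analytic, satisfying Δu = λu on ℝⁿ, and suppose u vanishes identically on the hyperplane H = {x : xₙ = 0}. Then u is antisymmetric across H: u(x₁,...,x_{n-1}, -x_n) = -u(x₁,...,x_{n-1},x_n) for all x ∈ ℝⁿ. -/
open Finset

/-- The geometer's Laplacian: `Δu = -∑ ∂²u/∂xₖ²`. -/
noncomputable def geomLaplacian (n : ℕ) (u : EuclideanSpace ℝ (Fin n) → ℝ)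
    (x : EuclideanSpace ℝ (Fin n)) : ℝ :=
  -∑ i : Fin n,
    fderiv ℝ (fun y => fderiv ℝ u y (EuclideanSpace.single i (1:ℝ))) x
      (EuclideanSpace.single i (1:ℝ))


theorem aux_one_var {g : ℝ → ℝ} (hg : ∀ t, AnalyticAt ℝ g t)
    (h0 : ∀ k, iteratedDeriv k g 0 = 0) : ∀ t, g t = 0 := by
  have hA : AnalyticOnNhd ℝ g Set.univ := fun t _ => hg t
  have hev : g =ᶠ[nhds (0:ℝ)] 0 := by
    obtain ⟨p, hp⟩ := hg 0
    obtain ⟨r, hr⟩ := hp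
    have hp0 : p = 0 := by
      ext k : 1
      show p k = 0
      rw [← FormalMultilinearSeries.coeff_eq_zero]
      have h1 := hr.factorial_smul (1:ℝ) k
      have h2 : iteratedFDeriv ℝ k g 0 (fun _ => (1:ℝ)) = 0 := by
        rw [← iteratedDeriv_eq_iteratedFDeriv]; exact h0 k
      rw [h2] at h1
      have h3 : p k (fun _ => (1:ℝ)) = 0 := by
        rcases smul_eq_zero.mp h1 with h | h
        · exact absurd h (Nat.factorial_ne_zero k)
        · exact h
      exact h3
    have hp' : HasFPowerSeriesAt g 0 0 := hp0 ▸ (⟨r, hr⟩ : HasFPowerSeriesAt g p 0)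
    exact hp'.eventually_eq_zero
  exact fun t => hA.eqOn_zero_of_preconnected_of_eventuallyEq_zero isPreconnected_univ
    (Set.mem_univ 0) hev (Set.mem_univ t)

open Finset

section LameAux
variable {n : ℕ}
local notation "E" => EuclideanSpace ℝ (Fin (n+1))

/-- directional derivative -/
noncomputable def dd (e : EuclideanSpace ℝ (Fin (n+1))) (f : EuclideanSpace ℝ (Fin (n+1)) → ℝ) :
    EuclideanSpace ℝ (Fin (n+1)) → ℝ :=
  fun x => fderiv ℝ f x e

theorem analytic_dd {f : E → ℝ} (hf : ∀ x, AnalyticAt ℝ f x) (e : E) :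
    ∀ x, AnalyticAt ℝ (dd e f) x := by
  intro x
  have h1 : AnalyticAt ℝ (fderiv ℝ f) x :=
    (AnalyticOnNhd.fderiv (fun y _ => hf y)) x (Set.mem_univ x)
  exact ((ContinuousLinearMap.apply ℝ ℝ e).analyticAt _).comp h1

theorem swap_dd {f : E → ℝ} (hf : ∀ x, AnalyticAt ℝ f x) (a b : E) (x : E) :
    dd b (dd a f) x = dd a (dd b f) x := by
  have hdf : ∀ y, HasFDerivAt f (fderiv ℝ f y) y :=
    fun y => (hf y).differentiableAt.hasFDerivAt
  have hf' : AnalyticAt ℝ (fderiv ℝ f) x :=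
    (AnalyticOnNhd.fderiv (fun y _ => hf y)) x (Set.mem_univ x)
  have hx : HasFDerivAt (fderiv ℝ f) (fderiv ℝ (fderiv ℝ f) x) x :=
    hf'.differentiableAt.hasFDerivAt
  have sym := second_derivative_symmetric hdf hx
  have key : ∀ c : E, dd c f = fun y => (ContinuousLinearMap.apply ℝ ℝ c) (fderiv ℝ f y) :=
    fun c => rfl
  have hcomp : ∀ c d : E, dd d (dd c f) x = fderiv ℝ (fderiv ℝ f) x d c := by
    intro c d
    have h : HasFDerivAt (fun y => (ContinuousLinearMap.apply ℝ ℝ c) (fderiv ℝ f y))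
        ((ContinuousLinearMap.apply ℝ ℝ c).comp (fderiv ℝ (fderiv ℝ f) x)) x :=
      (ContinuousLinearMap.apply ℝ ℝ c).hasFDerivAt.comp x hx
    show fderiv ℝ (dd c f) x d = _
    rw [key c, h.fderiv]
    rfl
  rw [hcomp a b, hcomp b a, sym a b]

theorem line_hasDerivAt {f : E → ℝ} {y e : E} (hf : DifferentiableAt ℝ f y) (e' : E) (t : ℝ)
    (hy : y = e' + t • e) :
    HasDerivAt (fun s : ℝ => f (e' + s • e)) (fderiv ℝ f y e) t := by
  subst hy
  have hline : HasDerivAt (fun s : ℝ => e' + s • e) e t := by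
    simpa using ((hasDerivAt_id t).smul_const e).const_add e'
  exact hf.hasFDerivAt.comp_hasDerivAt t hline

theorem tangent_deriv_zero {f : E → ℝ} (hf : ∀ x, DifferentiableAt ℝ f x) {i : Fin (n+1)}
    (hi : i ≠ Fin.last n)
    (hv : ∀ x : E, x (Fin.last n) = 0 → f x = 0) :
    ∀ x : E, x (Fin.last n) = 0 → dd (EuclideanSpace.single i 1) f x = 0 := by
  intro x hx
  set e : E := EuclideanSpace.single i 1 with he
  have hmem : ∀ s : ℝ, (x + s • e) (Fin.last n) = 0 := by
    intro s
    have h : e (Fin.last n) = 0 := by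
      simp [he, EuclideanSpace.single_apply, (Ne.symm hi)]
    simp [PiLp.add_apply, PiLp.smul_apply, hx, h]
  have hconst : (fun s : ℝ => f (x + s • e)) = fun _ => 0 := by
    funext s; exact hv _ (hmem s)
  have h1 : HasDerivAt (fun s : ℝ => f (x + s • e)) (fderiv ℝ f x e) 0 :=
    line_hasDerivAt (hf x) x 0 (by simp)
  have h2 : HasDerivAt (fun s : ℝ => f (x + s • e)) 0 0 := by
    rw [hconst]; exact hasDerivAt_const 0 0
  exact h1.unique h2

/-- reflection across the hyperplane `x_last = 0` -/
noncomputable def reflL (n : ℕ) :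
    EuclideanSpace ℝ (Fin (n+1)) →L[ℝ] EuclideanSpace ℝ (Fin (n+1)) :=
  ContinuousLinearMap.id ℝ _ -
    ((EuclideanSpace.proj (Fin.last n)).smulRight (EuclideanSpace.single (Fin.last n) (2:ℝ)))

theorem reflL_apply (x : E) :
    reflL n x = Function.update x (Fin.last n) (-(x (Fin.last n))) := by
  funext j
  simp only [reflL, ContinuousLinearMap.sub_apply, ContinuousLinearMap.id_apply,
    ContinuousLinearMap.smulRight_apply, PiLp.proj_apply]
  rw [Function.update_apply]
  by_cases h : j = Fin.last n
  · subst h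
    simp [PiLp.sub_apply, PiLp.smul_apply, EuclideanSpace.single_apply]
    ring
  · simp [PiLp.sub_apply, PiLp.smul_apply, EuclideanSpace.single_apply, h]

theorem reflL_single_ne {i : Fin (n+1)} (hi : i ≠ Fin.last n) :
    reflL n (EuclideanSpace.single i (1:ℝ)) = EuclideanSpace.single i 1 := by
  ext j
  rw [reflL_apply]
  rw [Function.update_apply]
  by_cases h : j = Fin.last n
  · subst h; simp [EuclideanSpace.single_apply, Ne.symm hi]
  · simp [h]

theorem reflL_single_last :
    reflL n (EuclideanSpace.single (Fin.last n) (1:ℝ)) =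
      -EuclideanSpace.single (Fin.last n) 1 := by
  ext j
  rw [reflL_apply]
  rw [Function.update_apply]
  by_cases h : j = Fin.last n
  · subst h; simp [EuclideanSpace.single_apply]
  · simp [EuclideanSpace.single_apply, h, PiLp.neg_apply]

theorem reflL_mem (x : E) (hx : x (Fin.last n) = 0) : reflL n x = x := by
  apply WithLp.ofLp_injective 2
  rw [reflL_apply, hx, neg_zero, ← hx, Function.update_eq_self]

theorem reflL_last_apply (x : E) : (reflL n x) (Fin.last n) = -(x (Fin.last n)) := by
  rw [reflL_apply, Function.update_self]

theorem dd_comp_reflL {f : E → ℝ} (hf : ∀ x, AnalyticAt ℝ f x) (e : E) (x : E) :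
    dd e (fun y => f (reflL n y)) x = dd (reflL n e) f (reflL n x) := by
  have h : HasFDerivAt (fun y => f (reflL n y))
      ((fderiv ℝ f (reflL n x)).comp (reflL n)) x :=
    ((hf _).differentiableAt.hasFDerivAt).comp x (reflL n).hasFDerivAt
  show fderiv ℝ _ x e = _
  rw [h.fderiv]
  rfl

/-- iterated directional derivative -/
noncomputable def nder (e : EuclideanSpace ℝ (Fin (n+1)))
    (f : EuclideanSpace ℝ (Fin (n+1)) → ℝ) : ℕ → EuclideanSpace ℝ (Fin (n+1)) → ℝ
  | 0 => f
  | (k+1) => dd e (nder e f k)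

theorem analytic_nder {f : E → ℝ} (hf : ∀ x, AnalyticAt ℝ f x) (e : E) (k : ℕ) :
    ∀ x, AnalyticAt ℝ (nder e f k) x := by
  induction k with
  | zero => exact hf
  | succ k ih => exact analytic_dd ih e

end LameAux

set_option maxHeartbeats 1000000 in
theorem lame_fundamental (n : ℕ) (u : EuclideanSpace ℝ (Fin (n + 1)) → ℝ)
    (hu : ∀ x, AnalyticAt ℝ u x) (lam : ℝ)
    (heq : ∀ x, geomLaplacian (n + 1) u x = lam * u x)
    (hvan : ∀ x : EuclideanSpace ℝ (Fin (n + 1)), x (Fin.last n) = 0 → u x = 0) :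
    ∀ x : EuclideanSpace ℝ (Fin (n + 1)),
      u (WithLp.toLp 2 (Function.update x (Fin.last n) (-(x (Fin.last n))))) = -u x := by
  classical
  set eL : EuclideanSpace ℝ (Fin (n+1)) := EuclideanSpace.single (Fin.last n) (1:ℝ) with heL
  set sing : Fin (n+1) → EuclideanSpace ℝ (Fin (n+1)) :=
    fun i => EuclideanSpace.single i (1:ℝ) with hsing
  -- the PDE for u, in `dd` form
  have hPDEu : ∀ x, ∑ i : Fin (n+1), dd (sing i) (dd (sing i) u) x = -(lam * u x) := by
    intro x
    have h := heq x
    unfold geomLaplacian at h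
    have : -∑ i : Fin (n+1), dd (sing i) (dd (sing i) u) x = lam * u x := h
    linarith
  -- the reflected function
  have huR : ∀ x, AnalyticAt ℝ (fun y => u (reflL n y)) x :=
    fun x => (hu _).comp ((reflL n).analyticAt x)
  set v : EuclideanSpace ℝ (Fin (n+1)) → ℝ := fun y => u (reflL n y) + u y with hv
  have hv_an : ∀ x, AnalyticAt ℝ v x := fun x => (huR x).add (hu x)
  -- second directional derivatives of u ∘ reflL
  have hdd2R : ∀ (i : Fin (n+1)) (x : EuclideanSpace ℝ (Fin (n+1))),
      dd (sing i) (dd (sing i) (fun y => u (reflL n y))) x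
        = dd (sing i) (dd (sing i) u) (reflL n x) := by
    intro i x
    by_cases hi : i = Fin.last n
    · subst hi
      have h1 : dd (sing (Fin.last n)) (fun y => u (reflL n y))
          = fun y => -(dd (sing (Fin.last n)) u (reflL n y)) := by
        funext y
        rw [dd_comp_reflL hu]
        show fderiv ℝ u (reflL n y) (reflL n (sing (Fin.last n))) = _
        rw [hsing, reflL_single_last, map_neg]
        rfl
      rw [h1]
      show fderiv ℝ (fun y => -(dd (sing (Fin.last n)) u (reflL n y))) x (sing (Fin.last n)) = _
      rw [fderiv_fun_neg]
      have h2 : fderiv ℝ (fun y => dd (sing (Fin.last n)) u (reflL n y)) x (sing (Fin.last n))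
          = dd (reflL n (sing (Fin.last n))) (dd (sing (Fin.last n)) u) (reflL n x) :=
        dd_comp_reflL (analytic_dd hu _) _ x
      show -(fderiv ℝ (fun y => dd (sing (Fin.last n)) u (reflL n y)) x (sing (Fin.last n))) = _
      rw [h2, hsing, reflL_single_last]
      show -(fderiv ℝ (dd (EuclideanSpace.single (Fin.last n) 1) u) (reflL n x)
        (-EuclideanSpace.single (Fin.last n) 1)) = _
      rw [map_neg, neg_neg]
      rfl
    · have h1 : dd (sing i) (fun y => u (reflL n y))
          = fun y => dd (sing i) u (reflL n y) := by
        funext y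
        rw [dd_comp_reflL hu]
        show fderiv ℝ u (reflL n y) (reflL n (sing i)) = _
        rw [hsing, reflL_single_ne hi]
        rfl
      rw [h1]
      have h2 : dd (sing i) (fun y => dd (sing i) u (reflL n y)) x
          = dd (reflL n (sing i)) (dd (sing i) u) (reflL n x) :=
        dd_comp_reflL (analytic_dd hu _) _ x
      rw [h2, hsing, reflL_single_ne hi]
  -- the PDE for v
  have hPDEv : ∀ x, ∑ i : Fin (n+1), dd (sing i) (dd (sing i) v) x = -(lam * v x) := by
    intro x
    have hsplit : ∀ i : Fin (n+1), dd (sing i) (dd (sing i) v) x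
        = dd (sing i) (dd (sing i) (fun y => u (reflL n y))) x
          + dd (sing i) (dd (sing i) u) x := by
      intro i
      have h1 : dd (sing i) v = fun y =>
          dd (sing i) (fun z => u (reflL n z)) y + dd (sing i) u y := by
        funext y
        show fderiv ℝ (fun z => u (reflL n z) + u z) y (sing i) = _
        rw [fderiv_fun_add (huR y).differentiableAt (hu y).differentiableAt]
        rfl
      rw [h1]
      show fderiv ℝ (fun y => dd (sing i) (fun z => u (reflL n z)) y + dd (sing i) u y) x (sing i)
        = _
      rw [fderiv_fun_add (analytic_dd huR _ x).differentiableAt (analytic_dd hu _ x).differentiableAt]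
      rfl
    calc ∑ i : Fin (n+1), dd (sing i) (dd (sing i) v) x
        = ∑ i : Fin (n+1), (dd (sing i) (dd (sing i) u) (reflL n x)
            + dd (sing i) (dd (sing i) u) x) := by
          refine Finset.sum_congr rfl fun i _ => ?_
          rw [hsplit i, hdd2R i x]
      _ = -(lam * v x) := by
          rw [Finset.sum_add_distrib, hPDEu, hPDEu, hv]
          ring
  -- the PDE propagates to all normal derivatives
  have hPDEk : ∀ k x, ∑ i : Fin (n+1), dd (sing i) (dd (sing i) (nder eL v k)) x
      = -(lam * nder eL v k x) := by
    intro k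
    induction k with
    | zero => exact hPDEv
    | succ k ih =>
      intro x
      set g : EuclideanSpace ℝ (Fin (n+1)) → ℝ := nder eL v k with hg
      have hg_an : ∀ y, AnalyticAt ℝ g y := analytic_nder hv_an eL k
      have step1 : ∀ i : Fin (n+1),
          dd (sing i) (dd (sing i) (nder eL v (k+1))) x
            = dd eL (dd (sing i) (dd (sing i) g)) x := by
        intro i
        have e1 : dd (sing i) (nder eL v (k+1)) = dd eL (dd (sing i) g) := by
          funext y
          exact swap_dd hg_an eL (sing i) y
        rw [show nder eL v (k+1) = dd eL g from rfl] at e1 ⊢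
        rw [e1]
        exact swap_dd (analytic_dd hg_an (sing i)) eL (sing i) x
      calc ∑ i : Fin (n+1), dd (sing i) (dd (sing i) (nder eL v (k+1))) x
          = ∑ i : Fin (n+1), dd eL (dd (sing i) (dd (sing i) g)) x := by
            exact Finset.sum_congr rfl fun i _ => step1 i
        _ = fderiv ℝ (fun y => ∑ i : Fin (n+1), dd (sing i) (dd (sing i) g) y) x eL := by
            rw [fderiv_fun_sum (u := Finset.univ)
              (A := fun i => dd (sing i) (dd (sing i) g)) (fun i _ =>
              (analytic_dd (analytic_dd hg_an (sing i)) (sing i) x).differentiableAt),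
              ContinuousLinearMap.sum_apply]
            rfl
        _ = fderiv ℝ (fun y => -(lam * g y)) x eL := by
            have hfun : (fun y => ∑ i : Fin (n+1), dd (sing i) (dd (sing i) g) y)
                = fun y => -(lam * g y) := funext fun y => ih y
            rw [hfun]
        _ = -(lam * nder eL v (k+1) x) := by
            rw [fderiv_fun_neg, fderiv_const_mul (hg_an x).differentiableAt]
            rfl
  -- all normal derivatives of v vanish on the hyperplane
  have hvank : ∀ k, ∀ x : EuclideanSpace ℝ (Fin (n+1)), x (Fin.last n) = 0 →
      nder eL v k x = 0 := by
    have main : ∀ k, (∀ x : EuclideanSpace ℝ (Fin (n+1)), x (Fin.last n) = 0 →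
        nder eL v k x = 0) ∧ (∀ x : EuclideanSpace ℝ (Fin (n+1)), x (Fin.last n) = 0 →
        nder eL v (k+1) x = 0) := by
      intro k
      induction k with
      | zero =>
        constructor
        · intro x hx
          show u (reflL n x) + u x = 0
          rw [hvan _ (by rw [reflL_last_apply, hx, neg_zero]), hvan _ hx, add_zero]
        · intro x hx
          show dd eL v x = 0
          have h1 : dd eL v x = dd eL (fun y => u (reflL n y)) x + dd eL u x := by
            show fderiv ℝ (fun y => u (reflL n y) + u y) x eL = _
            rw [fderiv_fun_add (huR x).differentiableAt (hu x).differentiableAt]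
            rfl
          have h2 : dd eL (fun y => u (reflL n y)) x = -(dd eL u x) := by
            rw [dd_comp_reflL hu, reflL_mem x hx, heL, reflL_single_last]
            show fderiv ℝ u x (-EuclideanSpace.single (Fin.last n) 1) = _
            rw [map_neg]
            rfl
          rw [h1, h2, neg_add_cancel]
      | succ k ih =>
        refine ⟨ih.2, ?_⟩
        intro x hx
        set g : EuclideanSpace ℝ (Fin (n+1)) → ℝ := nder eL v k with hg
        have hg_an : ∀ y, AnalyticAt ℝ g y := analytic_nder hv_an eL k
        have hsum := hPDEk k x
        have hzero : g x = 0 := ih.1 x hx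
        have hsplit : ∑ i ∈ (Finset.univ.erase (Fin.last n)),
            dd (sing i) (dd (sing i) g) x + dd (sing (Fin.last n)) (dd (sing (Fin.last n)) g) x
            = ∑ i : Fin (n+1), dd (sing i) (dd (sing i) g) x :=
          Finset.sum_erase_add _ _ (Finset.mem_univ _)
        have htang : ∀ i ∈ Finset.univ.erase (Fin.last n),
            dd (sing i) (dd (sing i) g) x = 0 := by
          intro i hi
          have hine : i ≠ Fin.last n := (Finset.mem_erase.mp hi).1
          have t1 : ∀ y : EuclideanSpace ℝ (Fin (n+1)), y (Fin.last n) = 0 →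
              dd (sing i) g y = 0 :=
            tangent_deriv_zero (fun y => (hg_an y).differentiableAt) hine ih.1
          exact tangent_deriv_zero
            (fun y => (analytic_dd hg_an (sing i) y).differentiableAt) hine t1 x hx
        have hers : ∑ i ∈ (Finset.univ.erase (Fin.last n)),
            dd (sing i) (dd (sing i) g) x = 0 :=
          Finset.sum_eq_zero htang
        show dd eL (dd eL g) x = 0
        have hlast : dd (sing (Fin.last n)) (dd (sing (Fin.last n)) g) x
            = dd eL (dd eL g) x := rfl
        have h9 := hsplit
        rw [hers, zero_add, hsum] at h9
        rw [← hlast, h9, show nder eL v k x = 0 from ih.1 x hx]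
        ring
    exact fun k => (main k).1
  -- conclude via one-variable analytic continuation along normal lines
  intro x
  set x' : EuclideanSpace ℝ (Fin (n+1)) := WithLp.toLp 2 (Function.update x (Fin.last n) 0) with hx'
  have hx'0 : x' (Fin.last n) = 0 := Function.update_self _ _ _
  have hxx : x' + (x (Fin.last n)) • eL = x := by
    ext j
    rw [PiLp.add_apply, PiLp.smul_apply]
    by_cases h : j = Fin.last n
    · subst h
      simp [hx', heL, EuclideanSpace.single_apply]
    · simp [hx', heL, EuclideanSpace.single_apply, h, Function.update_apply]
  set g : ℝ → ℝ := fun t => v (x' + t • eL) with hgdef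
  have hline_an : ∀ t : ℝ, AnalyticAt ℝ (fun s : ℝ => x' + s • eL) t := by
    intro t
    exact analyticAt_const.add ((analyticAt_id).smul analyticAt_const)
  have hg_an : ∀ t, AnalyticAt ℝ g t := fun t => (hv_an _).comp (hline_an t)
  have hgk : ∀ k t, iteratedDeriv k g t = nder eL v k (x' + t • eL) := by
    intro k
    induction k with
    | zero => intro t; rfl
    | succ k ih =>
      intro t
      rw [iteratedDeriv_succ]
      have h1 : iteratedDeriv k g = fun s => nder eL v k (x' + s • eL) := funext ih
      rw [h1]
      have h2 : HasDerivAt (fun s : ℝ => nder eL v k (x' + s • eL))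
          (fderiv ℝ (nder eL v k) (x' + t • eL) eL) t :=
        line_hasDerivAt (analytic_nder hv_an eL k _).differentiableAt x' t rfl
      rw [h2.deriv]
      rfl
  have h0 : ∀ k, iteratedDeriv k g 0 = 0 := by
    intro k
    rw [hgk k 0]
    have : x' + (0:ℝ) • eL = x' := by simp
    rw [this]
    exact hvank k x' hx'0
  have hg0 : ∀ t, g t = 0 := aux_one_var hg_an h0
  have hvx : v x = 0 := by
    have h := hg0 (x (Fin.last n))
    have h2 : v (x' + (x (Fin.last n)) • eL) = 0 := h
    rwa [hxx] at h2
  have : u (reflL n x) + u x = 0 := hvx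
  rw [← reflL_apply, WithLp.toLp_ofLp]
  linarith
end
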